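/- Let {x_i}_{i=1}^m be a frame for ℝⁿ. Then {x_i}_{i=1}^m is piecewise scalable if and only if there exist k ≤ n and a unitary (linear isometric isomorphism) U of ℝⁿ such that {U x_i}_{i=1}^m is piecewise scalable with the canonical projection Π_{[k]}, where Π_{[k]} is the orthogonal projection of ℝⁿ onto the span of the first k standard basis vectors e_1, ..., e_k. -/

import Mathlib

open scoped RealInnerProductSpace
open Finset

noncomputable section

/-- A finite family of vectors in `ℝⁿ` is a Parseval frame if
`∑ i, ⟪x, v i⟫² = ‖x‖²` for all `x`. -/
def IsParseval {n : ℕ} {ι : Type} [Fintype ι] (v : ι → EuclideanSpace ℝ (Fin n)) : Prop :=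
  ∀ x : EuclideanSpace ℝ (Fin n), ∑ i, ⟪x, v i⟫ ^ 2 = ‖x‖ ^ 2

/-- `P` is an orthogonal projection: idempotent and self-adjoint. -/
def IsOrthProj {n : ℕ} (P : EuclideanSpace ℝ (Fin n) →ₗ[ℝ] EuclideanSpace ℝ (Fin n)) : Prop :=
  P ∘ₗ P = P ∧ ∀ x y : EuclideanSpace ℝ (Fin n), ⟪P x, y⟫ = ⟪x, P y⟫

/-- The canonical projection `Π_[k]` of `ℝⁿ` onto the span of the first `k`
standard basis vectors: `x = (x(1),...,x(n)) ↦ (x(1),...,x(k),0,...,0)`. -/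
def canonProj (n k : ℕ) : EuclideanSpace ℝ (Fin n) →ₗ[ℝ] EuclideanSpace ℝ (Fin n) where
  toFun x := WithLp.toLp 2 (fun j : Fin n => if (j : ℕ) < k then x j else 0)
  map_add' x y := by
    ext j
    by_cases h : (j : ℕ) < k <;> simp [h, PiLp.add_apply]
  map_smul' c x := by
    ext j
    by_cases h : (j : ℕ) < k <;> simp [h, PiLp.smul_apply]

lemma canonProj_apply {n k : ℕ} (x : EuclideanSpace ℝ (Fin n)) (j : Fin n) :
    canonProj n k x j = if (j : ℕ) < k then x j else 0 := rfl

lemma canonProj_idem {n k : ℕ} (x : EuclideanSpace ℝ (Fin n)) :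
    canonProj n k (canonProj n k x) = canonProj n k x := by
  ext j
  by_cases h : (j : ℕ) < k <;> simp [canonProj_apply, h]

lemma canonProj_selfAdj {n k : ℕ} (x y : EuclideanSpace ℝ (Fin n)) :
    ⟪canonProj n k x, y⟫ = ⟪x, canonProj n k y⟫ := by
  simp only [PiLp.inner_apply, RCLike.inner_apply, canonProj_apply]
  refine Finset.sum_congr rfl fun j _ => ?_
  by_cases h : (j : ℕ) < k <;> simp [h]

lemma isParseval_comp {n m : ℕ} (U : EuclideanSpace ℝ (Fin n) ≃ₗᵢ[ℝ] EuclideanSpace ℝ (Fin n))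
    (v : Fin m → EuclideanSpace ℝ (Fin n)) (hv : IsParseval v) :
    IsParseval (fun i => U (v i)) := by
  intro y
  have h1 : ∀ i, ⟪y, U (v i)⟫ = ⟪U.symm y, v i⟫ := by
    intro i
    conv_lhs => rw [← U.apply_symm_apply y]
    exact U.inner_map_map _ _
  simp_rw [h1]
  rw [hv (U.symm y), U.symm.norm_map]

theorem stmt9 {m n : ℕ} (x : Fin m → EuclideanSpace ℝ (Fin n))
    (hframe : Submodule.span ℝ (Set.range x) = ⊤) :
    (∃ P : EuclideanSpace ℝ (Fin n) →ₗ[ℝ] EuclideanSpace ℝ (Fin n),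
      IsOrthProj P ∧ ∃ a b : Fin m → ℝ,
        IsParseval (fun i => a i • P (x i) + b i • (x i - P (x i)))) ↔
    (∃ k ≤ n, ∃ U : EuclideanSpace ℝ (Fin n) ≃ₗᵢ[ℝ] EuclideanSpace ℝ (Fin n),
      ∃ a b : Fin m → ℝ,
        IsParseval (fun i =>
          a i • canonProj n k (U (x i)) +
            b i • (U (x i) - canonProj n k (U (x i))))) := by
  constructor
  · rintro ⟨P, ⟨hidem, hadj⟩, a, b, hP⟩
    -- the range of P
    set V : Submodule ℝ (EuclideanSpace ℝ (Fin n)) := LinearMap.range P with hV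
    set k : ℕ := Module.finrank ℝ V with hkdef
    have hdim : Module.finrank ℝ (EuclideanSpace ℝ (Fin n)) = n :=
      finrank_euclideanSpace_fin
    have hk : k ≤ n := by
      rw [← hdim]; exact V.finrank_le
    have hsum : k + Module.finrank ℝ Vᗮ = n := by
      have h := V.finrank_add_finrank_orthogonal
      rw [hdim] at h
      rw [hkdef]; exact h
    -- P fixes V and kills Vᗮ
    have hfix : ∀ v ∈ V, P v = v := by
      rintro v ⟨u, rfl⟩
      have := congrArg (fun T => T u) hidem
      simpa using this
    have hkill : ∀ w ∈ Vᗮ, P w = 0 := by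
      intro w hw
      have h0 : ⟪P w, P w⟫ = 0 := by
        rw [hadj, real_inner_comm]
        have : P (P w) ∈ V := ⟨P w, rfl⟩
        exact (Submodule.mem_orthogonal V w).mp hw _ this
      simpa using inner_self_eq_zero.mp h0
    -- an adapted orthonormal basis
    let bV := stdOrthonormalBasis ℝ V
    let bW := stdOrthonormalBasis ℝ Vᗮ
    let f : Fin n → EuclideanSpace ℝ (Fin n) := fun j =>
      if h : (j : ℕ) < k then (bV ⟨j, h⟩ : EuclideanSpace ℝ (Fin n))
      else (bW ⟨(j : ℕ) - k, by omega⟩ : EuclideanSpace ℝ (Fin n))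
    have hfV : ∀ j : Fin n, (j : ℕ) < k → f j ∈ V := by
      intro j h; simp only [f, dif_pos h]; exact (bV ⟨j, h⟩).2
    have hfW : ∀ j : Fin n, ¬ (j : ℕ) < k → f j ∈ Vᗮ := by
      intro j h; simp only [f, dif_neg h]; exact (bW _).2
    have hon : Orthonormal ℝ f := by
      rw [orthonormal_iff_ite]
      intro i j
      by_cases hi : (i : ℕ) < k <;> by_cases hj : (j : ℕ) < k
      · simp only [f, dif_pos hi, dif_pos hj]
        rw [← Submodule.coe_inner]
        rw [orthonormal_iff_ite.mp bV.orthonormal]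
        by_cases h : i = j
        · simp [h]
        · rw [if_neg h, if_neg (by rw [Fin.mk_eq_mk]; intro hc; exact h (Fin.ext hc))]
      · rw [Submodule.inner_right_of_mem_orthogonal (hfV i hi) (hfW j hj),
          if_neg (by rintro rfl; exact hj hi)]
      · rw [real_inner_comm, Submodule.inner_right_of_mem_orthogonal (hfV j hj) (hfW i hi),
          if_neg (by rintro rfl; exact hi hj)]
      · simp only [f, dif_neg hi, dif_neg hj]
        rw [← Submodule.coe_inner]
        rw [orthonormal_iff_ite.mp bW.orthonormal]
        by_cases h : i = j
        · simp [h]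
        · rw [if_neg h, if_neg (by rw [Fin.mk_eq_mk]; intro hc; exact h (Fin.ext (by omega)))]
    have hspan : ⊤ ≤ Submodule.span ℝ (Set.range f) :=
      (hon.linearIndependent.span_eq_top_of_card_eq_finrank'
        (by simp [hdim])).ge
    let bb : OrthonormalBasis (Fin n) ℝ (EuclideanSpace ℝ (Fin n)) :=
      OrthonormalBasis.mk hon hspan
    have hbb : ∀ j, bb j = f j := fun j => OrthonormalBasis.coe_mk hon hspan ▸ rfl
    let U := bb.repr
    -- key identity
    have hkey : ∀ y : EuclideanSpace ℝ (Fin n), canonProj n k (U y) = U (P y) := by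
      intro y
      ext j
      have hU : ∀ z : EuclideanSpace ℝ (Fin n), U z j = ⟪f j, z⟫ := by
        intro z
        have := bb.repr_apply_apply z j
        rw [hbb j] at this
        simpa using this
      rw [canonProj_apply, hU y, hU (P y), ← hadj]
      by_cases h : (j : ℕ) < k
      · rw [if_pos h, hfix _ (hfV j h)]
      · rw [if_neg h, hkill _ (hfW j h), inner_zero_left]
    refine ⟨k, hk, U, a, b, ?_⟩
    have heq : (fun i =>
        a i • canonProj n k (U (x i)) + b i • (U (x i) - canonProj n k (U (x i)))) =
        fun i => U (a i • P (x i) + b i • (x i - P (x i))) := by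
      funext i
      rw [hkey]
      simp [map_add, map_smul, map_sub]
    rw [heq]
    exact isParseval_comp U _ hP
  · rintro ⟨k, hk, U, a, b, hP⟩
    refine ⟨U.symm.toLinearMap ∘ₗ canonProj n k ∘ₗ U.toLinearMap, ⟨?_, ?_⟩, a, b, ?_⟩
    · ext y
      simp [canonProj_idem]
    · intro y z
      show ⟪U.symm (canonProj n k (U y)), z⟫ = ⟪y, U.symm (canonProj n k (U z))⟫
      rw [← U.inner_map_map (U.symm (canonProj n k (U y))) z, U.apply_symm_apply,
        canonProj_selfAdj, ← U.inner_map_map y (U.symm (canonProj n k (U z))),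
        U.apply_symm_apply]
    · have heq : (fun i =>
          a i • (U.symm.toLinearMap ∘ₗ canonProj n k ∘ₗ U.toLinearMap) (x i) +
            b i • (x i - (U.symm.toLinearMap ∘ₗ canonProj n k ∘ₗ U.toLinearMap) (x i))) =
          fun i => U.symm (a i • canonProj n k (U (x i)) +
            b i • (U (x i) - canonProj n k (U (x i)))) := by
        funext i
        simp [map_add, map_smul, map_sub]
      rw [heq]
      exact isParseval_comp U.symm _ hP
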